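/- Let $g: \mathbb{R}^{d'} \to \mathbb{R}$ be $\mu$-strongly concave and $L$-smooth with maximizer $y^*$. Consider the update $y^+ = y + \gamma_2\eta\, u$ for a direction $u$ and step sizes $\gamma_2 \le \tfrac{1}{6L}$, $0 < \eta \le 1$. Then $\|y^+ - y^*\|^2 \le (1 - \tfrac{\eta\gamma_2\mu}{2})\|y - y^*\|^2 - \tfrac{3\gamma_2^2\eta}{4}\|u\|^2 + \tfrac{25\eta\gamma_2}{6\mu}\|\nabla g(y) - u\|^2$. -/

import Mathlib

open RealInnerProductSpace

lemma descent_aux {F : Type*} [NormedAddCommGroup F] [InnerProductSpace ℝ F] [CompleteSpace F]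
    (g : F → ℝ) (gradg : F → F) (L : ℝ) (hL : 0 < L)
    (hgrad : ∀ y, HasGradientAt g (gradg y) y)
    (hlip : ∀ y₁ y₂, ‖gradg y₁ - gradg y₂‖ ≤ L * ‖y₁ - y₂‖)
    (y v : F) : g y + ⟪gradg y, v⟫ - L / 2 * ‖v‖ ^ 2 ≤ g (y + v) := by
  have hcont : Continuous gradg := by
    have : LipschitzWith L.toNNReal gradg :=
      LipschitzWith.of_dist_le_mul fun a b => by
        simpa [dist_eq_norm, Real.coe_toNNReal L hL.le] using hlip a b
    exact this.continuous
  have hline : Continuous fun t : ℝ => y + t • v := by continuity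
  have hφ : ∀ t : ℝ, HasDerivAt (fun s : ℝ => g (y + s • v)) ⟪gradg (y + t • v), v⟫ t := by
    intro t
    have h1 : HasFDerivAt g ((InnerProductSpace.toDual ℝ F) (gradg (y + t • v))) (y + t • v) :=
      (hgrad _).hasFDerivAt
    have h2 : HasDerivAt (fun s : ℝ => y + s • v) v t := by
      simpa using ((hasDerivAt_id t).smul_const v).const_add y
    have := h1.comp_hasDerivAt t h2
    simpa [InnerProductSpace.toDual_apply_apply, Function.comp_def] using this
  have hcint : Continuous fun t : ℝ => ⟪gradg (y + t • v), v⟫ :=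
    ((hcont.comp hline).inner continuous_const)
  have hint : ∫ t in (0:ℝ)..1, ⟪gradg (y + t • v), v⟫ = g (y + v) - g y := by
    have := intervalIntegral.integral_eq_sub_of_hasDerivAt (f := fun s : ℝ => g (y + s • v))
      (f' := fun t => ⟪gradg (y + t • v), v⟫) (fun t _ => hφ t)
      (hcint.intervalIntegrable 0 1)
    simpa using this
  have hlow : ∫ t in (0:ℝ)..1, (⟪gradg y, v⟫ - L * ‖v‖ ^ 2 * t)
      ≤ ∫ t in (0:ℝ)..1, ⟪gradg (y + t • v), v⟫ := by
    apply intervalIntegral.integral_mono_on (by norm_num)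
    · exact ((continuous_const.sub (continuous_const.mul continuous_id)).intervalIntegrable 0 1)
    · exact hcint.intervalIntegrable 0 1
    · intro t ht
      have hdiff : ‖gradg (y + t • v) - gradg y‖ ≤ L * (t * ‖v‖) := by
        have := hlip (y + t • v) y
        simpa [norm_smul, abs_of_nonneg ht.1] using this
      have hcs : -(‖gradg (y + t • v) - gradg y‖ * ‖v‖) ≤ ⟪gradg (y + t • v) - gradg y, v⟫ :=
        neg_le_of_abs_le (abs_real_inner_le_norm _ _)
      have hsplit : ⟪gradg (y + t • v), v⟫ = ⟪gradg y, v⟫ + ⟪gradg (y + t • v) - gradg y, v⟫ := by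
        rw [← inner_add_left]; congr 1; abel
      have hv : (0:ℝ) ≤ ‖v‖ := norm_nonneg v
      nlinarith [mul_le_mul_of_nonneg_right hdiff hv]
  have hval : ∫ t in (0:ℝ)..1, (⟪gradg y, v⟫ - L * ‖v‖ ^ 2 * t)
      = ⟪gradg y, v⟫ - L / 2 * ‖v‖ ^ 2 := by
    have hi2 : IntervalIntegrable (fun t : ℝ => L * ‖v‖ ^ 2 * t) MeasureTheory.volume 0 1 := by
      apply Continuous.intervalIntegrable; continuity
    rw [intervalIntegral.integral_sub intervalIntegrable_const hi2,
      intervalIntegral.integral_const_mul, integral_id]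
    simp
    ring
  linarith [hlow, hint ▸ hlow, hval]

set_option maxHeartbeats 1000000 in
/-- One-step inexact gradient ascent contraction for a strongly concave smooth
function. -/
theorem stmt_10 {F : Type*} [NormedAddCommGroup F] [InnerProductSpace ℝ F]
    [CompleteSpace F]
    (g : F → ℝ) (gradg : F → F) (μ L γ₂ η : ℝ)
    (hμ : 0 < μ) (hμL : μ ≤ L)
    (hgrad : ∀ y, HasGradientAt g (gradg y) y)
    (hlip : ∀ y₁ y₂, ‖gradg y₁ - gradg y₂‖ ≤ L * ‖y₁ - y₂‖)
    (hsc : ∀ y₁ y₂, g y₁ ≤ g y₂ + ⟪gradg y₂, y₁ - y₂⟫ - μ / 2 * ‖y₁ - y₂‖ ^ 2)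
    (ystar : F) (hmax : ∀ y, g y ≤ g ystar)
    (hγ : 0 < γ₂) (hγL : γ₂ ≤ 1 / (6 * L)) (hη0 : 0 < η) (hη1 : η ≤ 1)
    (y u : F) :
    ‖(y + (γ₂ * η) • u) - ystar‖ ^ 2
      ≤ (1 - η * γ₂ * μ / 2) * ‖y - ystar‖ ^ 2
        - (3 * γ₂ ^ 2 * η / 4) * ‖u‖ ^ 2
        + (25 * η * γ₂ / (6 * μ)) * ‖gradg y - u‖ ^ 2 := by
  have hL : 0 < L := hμ.trans_le hμL
  have hc : 0 ≤ γ₂ * η := (mul_pos hγ hη0).le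
  -- Step A : g y + 1/(2L) ‖∇g y‖² ≤ g ystar
  have hdesc := descent_aux g gradg L hL hgrad hlip y ((1/L) • gradg y)
  have hiv : ⟪gradg y, (1/L) • gradg y⟫ = (1/L) * ‖gradg y‖ ^ 2 := by
    rw [real_inner_smul_right, real_inner_self_eq_norm_sq]
  have hnv : ‖(1/L) • gradg y‖ ^ 2 = (1/L) ^ 2 * ‖gradg y‖ ^ 2 := by
    rw [norm_smul, Real.norm_eq_abs, mul_pow, sq_abs]
  rw [hiv, hnv] at hdesc
  have harr : 1/L * ‖gradg y‖ ^ 2 - L/2 * ((1/L) ^ 2 * ‖gradg y‖ ^ 2)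
      = 1/(2*L) * ‖gradg y‖ ^ 2 := by field_simp; ring
  have hkey : g y + 1/(2*L) * ‖gradg y‖ ^ 2 ≤ g ystar := by
    have hm := hmax (y + (1/L) • gradg y)
    linarith
  -- Step B : strong concavity at ystar
  have h1 : ⟪gradg y, y - ystar⟫
      ≤ -(1/(2*L) * ‖gradg y‖ ^ 2) - μ/2 * ‖y - ystar‖ ^ 2 := by
    have hs := hsc ystar y
    rw [norm_sub_rev] at hs
    have hni : ⟪gradg y, y - ystar⟫ = -⟪gradg y, ystar - y⟫ := by
      rw [← inner_neg_right]; congr 1; abel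
    rw [hni]; linarith
  -- Step C : Young's inequality on the error term
  have hcs2 : -⟪gradg y - u, y - ystar⟫
      ≤ μ/4 * ‖y - ystar‖ ^ 2 + 1/μ * ‖gradg y - u‖ ^ 2 := by
    have h2 : -⟪gradg y - u, y - ystar⟫ ≤ ‖gradg y - u‖ * ‖y - ystar‖ :=
      (neg_le_abs _).trans (abs_real_inner_le_norm _ _)
    have hfact : μ * (μ/4 * ‖y - ystar‖ ^ 2 + 1/μ * ‖gradg y - u‖ ^ 2
        - ‖gradg y - u‖ * ‖y - ystar‖)
        = (μ/2 * ‖y - ystar‖ - ‖gradg y - u‖) ^ 2 := by field_simp; ring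
    nlinarith [sq_nonneg (μ/2 * ‖y - ystar‖ - ‖gradg y - u‖), hμ, h2]
  -- Step D : expansion of the squared norm
  have hexp : ‖(y + (γ₂ * η) • u) - ystar‖ ^ 2
      = ‖y - ystar‖ ^ 2 + 2 * (γ₂ * η) * ⟪u, y - ystar⟫ + (γ₂ * η) ^ 2 * ‖u‖ ^ 2 := by
    have hre : (y + (γ₂ * η) • u) - ystar = (y - ystar) + (γ₂ * η) • u := by abel
    rw [hre, norm_add_sq_real, real_inner_smul_right, norm_smul, Real.norm_eq_abs,
      mul_pow, sq_abs, real_inner_comm (y - ystar) u]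
    ring
  have hsplitu : ⟪u, y - ystar⟫
      = ⟪gradg y, y - ystar⟫ - ⟪gradg y - u, y - ystar⟫ := by
    rw [← inner_sub_left]; congr 1; abel
  -- Step E : combine
  have hstep1 : ‖(y + (γ₂ * η) • u) - ystar‖ ^ 2
      ≤ (1 - γ₂ * η * μ / 2) * ‖y - ystar‖ ^ 2
        - (γ₂ * η / L) * ‖gradg y‖ ^ 2
        + (2 * γ₂ * η / μ) * ‖gradg y - u‖ ^ 2
        + (γ₂ * η) ^ 2 * ‖u‖ ^ 2 := by
    rw [hexp, hsplitu]
    have p1 := mul_le_mul_of_nonneg_left h1 hc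
    have p2 := mul_le_mul_of_nonneg_left hcs2 hc
    ring_nf at p1 p2 ⊢
    linarith
  -- Step F : bound ‖u‖² by gradients
  have hGlow : ‖u‖ ^ 2 ≤ 2 * ‖gradg y‖ ^ 2 + 2 * ‖gradg y - u‖ ^ 2 := by
    have hu : u = gradg y - (gradg y - u) := by abel
    nth_rewrite 1 [hu]
    rw [norm_sub_sq_real]
    have hip : -inner ℝ (gradg y) (gradg y - u) ≤ ‖gradg y‖ * ‖gradg y - u‖ :=
      (neg_le_abs _).trans (abs_real_inner_le_norm _ _)
    have hsq := sq_nonneg (‖gradg y‖ - ‖gradg y - u‖)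
    ring_nf at hsq
    linarith [hip, hsq]
  -- Step G : scalar coefficient inequalities
  have h6 : γ₂ * L ≤ 1/6 := by
    have := (le_div_iff₀ (by positivity : (0:ℝ) < 6 * L)).mp hγL
    linarith
  have hcU : (γ₂ * η) ^ 2 + 3 * γ₂ ^ 2 * η / 4 ≤ γ₂ * η / (2 * L) := by
    rw [le_div_iff₀ (by positivity : (0:ℝ) < 2 * L)]
    have q1 := mul_le_mul_of_nonneg_left h6 (by positivity : (0:ℝ) ≤ γ₂ * η * η)
    have q2 := mul_le_mul_of_nonneg_left h6 (by positivity : (0:ℝ) ≤ γ₂ * η)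
    have q3 := mul_le_mul_of_nonneg_left hη1 (by positivity : (0:ℝ) ≤ γ₂ * η)
    ring_nf at q1 q2 q3 ⊢
    linarith
  have hmul1 : (γ₂ * η / (2 * L)) * ‖u‖ ^ 2
      ≤ (γ₂ * η / (2 * L)) * (2 * ‖gradg y‖ ^ 2 + 2 * ‖gradg y - u‖ ^ 2) :=
    mul_le_mul_of_nonneg_left hGlow (by positivity)
  have hmul2 : (γ₂ * η / L) * ‖gradg y - u‖ ^ 2 ≤ (γ₂ * η / μ) * ‖gradg y - u‖ ^ 2 :=
    mul_le_mul_of_nonneg_right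
      (div_le_div_of_nonneg_left hc hμ hμL) (sq_nonneg _)
  have hmul3 : ((γ₂ * η) ^ 2 + 3 * γ₂ ^ 2 * η / 4) * ‖u‖ ^ 2
      ≤ (γ₂ * η / (2 * L)) * ‖u‖ ^ 2 :=
    mul_le_mul_of_nonneg_right hcU (sq_nonneg _)
  have hEnn : 0 ≤ (γ₂ * η / μ) * ‖gradg y - u‖ ^ 2 := by positivity
  ring_nf at hstep1 hmul1 hmul2 hmul3 hEnn ⊢
  linarith only [hstep1, hmul1, hmul2, hmul3, hEnn]
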